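/- arXiv:1004.0211 — 11 statements merged into one kernel-verified Lean document; each statement's English description precedes it below -/
import Mathlib

section
/- Let X be a zero-dimensional metrizable space in which every open set is a countable union of clopen sets, and let G ⊆ X be a G_δ set. Then there exists a sequence (U_n) of open subsets of X that is a point-cofinite cover of X (i.e., every point of X lies in all but finitely many U_n) such that G = ⋂_n U_n. -/
open Filter

/-- In a zero-dimensional metrizable space in which every open set is a
countable union of clopen sets, every `G_δ` set is the intersection of an
open point-cofinite cover of the space. -/
theorem gdelta_eq_inter_of_point_cofinite_cover
    {X : Type*} [TopologicalSpace X] [TopologicalSpace.MetrizableSpace X]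
    (hclopen : ∀ U : Set X, IsOpen U →
      ∃ C : ℕ → Set X, (∀ n, IsClopen (C n)) ∧ U = ⋃ n, C n)
    (G : Set X) (hG : IsGδ G) :
    ∃ U : ℕ → Set X, (∀ n, IsOpen (U n)) ∧
      (∀ x : X, ∀ᶠ n in atTop, x ∈ U n) ∧ G = ⋂ n, U n := by
  obtain ⟨V, hVopen, rfl⟩ := hG.eq_iInter_nat
  -- W n : finite intersections
  set W : ℕ → Set X := fun n => ⋂ i ∈ Finset.range n, V i with hW
  have hWopen : ∀ n, IsOpen (W n) := fun n =>
    isOpen_biInter_finset (fun i _ => hVopen i)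
  have hWmem : ∀ x n, x ∈ W n ↔ ∀ i < n, x ∈ V i := by
    intro x n
    simp [hW, Set.mem_iInter, Finset.mem_range]
  have hWanti : ∀ {m n : ℕ}, m ≤ n → W n ⊆ W m := by
    intro m n hmn x hx
    rw [hWmem] at hx ⊢
    exact fun i hi => hx i (lt_of_lt_of_le hi hmn)
  -- clopen decompositions of each W n
  choose C hCclopen hCunion using fun n => hclopen (W n) (hWopen n)
  -- disjointified pieces
  set D : ℕ → ℕ → Set X := fun n k => C n k \ ⋃ j ∈ Finset.range k, C n j with hD
  have hDsubW : ∀ n k, D n k ⊆ W n := by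
    intro n k x hx
    rw [hCunion n]
    exact Set.mem_iUnion.mpr ⟨k, hx.1⟩
  have hDclopen : ∀ n k, IsClopen (D n k) := by
    intro n k
    exact (hCclopen n k).diff (isClopen_biUnion_finset fun j _ => hCclopen n j)
  have hDexists : ∀ n x, x ∈ W n → ∃ k, x ∈ D n k := by
    intro n x hx
    have hx' : ∃ k, x ∈ C n k := by
      rw [hCunion n] at hx
      exact Set.mem_iUnion.mp hx
    classical
    refine ⟨Nat.find hx', Nat.find_spec hx', ?_⟩
    simp only [Set.mem_iUnion, Finset.mem_range, not_exists]
    intro j hj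
    exact Nat.find_min hx' hj
  have hDdisj : ∀ n k k' x, x ∈ D n k → x ∈ D n k' → k = k' := by
    intro n k k' x hk hk'
    by_contra hne
    rcases lt_or_gt_of_ne hne with h | h
    · exact hk'.2 (Set.mem_biUnion (Finset.mem_range.mpr h) hk.1)
    · exact hk.2 (Set.mem_biUnion (Finset.mem_range.mpr h) hk'.1)
  -- the cover
  refine ⟨fun m => W (m.unpair.1 + 1) ∪ (D m.unpair.1 m.unpair.2)ᶜ, ?_, ?_, ?_⟩
  · intro m
    exact (hWopen _).union (hDclopen _ _).compl.isOpen
  · intro x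
    rw [← Nat.cofinite_eq_atTop, eventually_cofinite]
    apply Set.Subsingleton.finite
    intro m hm m' hm'
    simp only [Set.mem_setOf_eq, Set.mem_union, Set.mem_compl_iff, not_or, not_not] at hm hm'
    obtain ⟨hmW, hmD⟩ := hm
    obtain ⟨hmW', hmD'⟩ := hm'
    have hn : m.unpair.1 = m'.unpair.1 := by
      by_contra hne
      rcases lt_or_gt_of_ne hne with h | h
      · exact hmW (hWanti (Nat.succ_le_of_lt h) (hDsubW _ _ hmD'))
      · exact hmW' (hWanti (Nat.succ_le_of_lt h) (hDsubW _ _ hmD))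
    have hk : m.unpair.2 = m'.unpair.2 := by
      rw [hn] at hmD
      exact hDdisj _ _ _ x hmD hmD'
    rw [← Nat.pair_unpair m, ← Nat.pair_unpair m', hn, hk]
  · ext x
    simp only [Set.mem_iInter, Set.mem_union, Set.mem_compl_iff]
    constructor
    · intro hx m
      left
      rw [hWmem]
      exact fun i _ => hx i
    · intro hx
      have key : ∀ n, x ∈ W n := by
        intro n
        induction n with
        | zero =>
          rw [hWmem]
          intro i hi
          exact absurd hi (Nat.not_lt_zero i)
        | succ n ih =>
          obtain ⟨k, hk⟩ := hDexists n x ih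
          rcases hx (Nat.pair n k) with h | h
          · rw [Nat.unpair_pair] at h; exact h
          · rw [Nat.unpair_pair] at h; exact absurd hk h
      intro i
      have := key (i + 1)
      rw [hWmem] at this
      exact this i (lt_add_one i)
end

section
/- Let X be a topological space, Y a metric space, and suppose Ψ : X → Y is a quasi-normal limit of continuous functions Ψ_n : X → Y; that is, there exist positive reals ε_n → 0 such that for every x ∈ X, d(Ψ_n(x), Ψ(x)) < ε_n for all but finitely many n. Then X can be written as a countable increasing union of closed sets X_k such that the restriction of Ψ to each X_k is continuous (indeed, Ψ_n → Ψ uniformly on each X_k). -/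
open Filter

/-- If `Ψ : X → Y` (`Y` metric) is a quasi-normal limit of continuous
functions `Ψ n`, then `X` is a countable increasing union of closed sets on
each of which `Ψ n → Ψ` uniformly; in particular `Ψ` is continuous on each of
these closed sets. -/
theorem quasinormal_limit_closed_decomposition
    {X Y : Type*} [TopologicalSpace X] [MetricSpace Y]
    (Ψ : X → Y) (Ψn : ℕ → X → Y) (hc : ∀ n, Continuous (Ψn n))
    (ε : ℕ → ℝ) (hεpos : ∀ n, 0 < ε n)
    (hε0 : Tendsto ε atTop (nhds 0))
    (hqn : ∀ x : X, ∀ᶠ n in atTop, dist (Ψn n x) (Ψ x) < ε n) :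
    ∃ Xk : ℕ → Set X, (∀ k, IsClosed (Xk k)) ∧ (∀ k, Xk k ⊆ Xk (k + 1)) ∧
      (⋃ k, Xk k) = Set.univ ∧
      (∀ k, ContinuousOn Ψ (Xk k)) ∧
      (∀ k, TendstoUniformlyOn Ψn Ψ atTop (Xk k)) := by
  set Xk : ℕ → Set X := fun k =>
    {x | ∀ n, k ≤ n → ∀ m, k ≤ m → dist (Ψn n x) (Ψn m x) ≤ ε n + ε m} with hXk
  -- key estimate: on Xk k, dist (Ψn n x) (Ψ x) ≤ ε n for n ≥ k
  have key : ∀ k x, x ∈ Xk k → ∀ n, k ≤ n → dist (Ψn n x) (Ψ x) ≤ ε n := by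
    intro k x hx n hn
    have htend : Tendsto (fun m => ε n + ε m + ε m) atTop (nhds (ε n)) := by
      have := (tendsto_const_nhds (x := ε n) (f := atTop)).add hε0 |>.add hε0
      simpa using this
    refine ge_of_tendsto htend ?_
    filter_upwards [hqn x, eventually_ge_atTop k] with m hm hkm
    calc dist (Ψn n x) (Ψ x) ≤ dist (Ψn n x) (Ψn m x) + dist (Ψn m x) (Ψ x) :=
          dist_triangle _ _ _
      _ ≤ (ε n + ε m) + ε m := add_le_add (hx n hn m hkm) hm.le
  have hunif : ∀ k, TendstoUniformlyOn Ψn Ψ atTop (Xk k) := by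
    intro k
    rw [Metric.tendstoUniformlyOn_iff]
    intro δ hδ
    filter_upwards [hε0.eventually (gt_mem_nhds hδ), eventually_ge_atTop k]
      with n hn hkn x hx
    calc dist (Ψ x) (Ψn n x) = dist (Ψn n x) (Ψ x) := dist_comm _ _
      _ ≤ ε n := key k x hx n hkn
      _ < δ := hn
  refine ⟨Xk, ?_, ?_, ?_, ?_, hunif⟩
  · intro k
    have : Xk k = ⋂ n, ⋂ (_ : k ≤ n), ⋂ m, ⋂ (_ : k ≤ m),
        {x | dist (Ψn n x) (Ψn m x) ≤ ε n + ε m} := by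
      ext x; simp [hXk]
    rw [this]
    exact isClosed_iInter fun n => isClosed_iInter fun _ =>
      isClosed_iInter fun m => isClosed_iInter fun _ =>
        isClosed_le (((hc n).dist (hc m))) continuous_const
  · intro k x hx n hn m hm
    exact hx n (le_trans (Nat.le_succ k) hn) m (le_trans (Nat.le_succ k) hm)
  · ext x
    simp only [Set.mem_iUnion, Set.mem_univ, iff_true]
    obtain ⟨k, hk⟩ := (hqn x).exists_forall_of_atTop
    refine ⟨k, fun n hn m hm => ?_⟩
    calc dist (Ψn n x) (Ψn m x) ≤ dist (Ψn n x) (Ψ x) + dist (Ψ x) (Ψn m x) :=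
          dist_triangle _ _ _
      _ ≤ ε n + ε m := add_le_add (hk n hn).le (by rw [dist_comm]; exact (hk m hm).le)
  · intro k
    exact (hunif k).continuousOn (Eventually.of_forall (f := atTop) fun n => (hc n).continuousOn).frequently
end

section
/- Suppose P is a property of topological spaces preserved under closed subspaces, continuous images, and countable unions of subspaces. If X has property P, Y is a metric space, and Ψ : X → Y is a quasi-normal limit of continuous functions X → Y, then Ψ[X] has property P. -/
open Filter

universe u

/-- If a property `P` of topological spaces is preserved by closed subspaces,
continuous images, and countable unions of subspaces, then `P` is preserved
by quasi-normal limits of continuous functions into metric spaces: if `X`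
has `P` and `Ψ : X → Y` is a quasi-normal limit of continuous functions,
then the image `Ψ[X]` has `P`. -/
theorem property_preserved_by_quasinormal_limit
    (P : (Z : Type u) → [TopologicalSpace Z] → Prop)
    (hClosed : ∀ (Z : Type u) [TopologicalSpace Z] (A : Set Z),
      IsClosed A → P Z → P A)
    (hImage : ∀ (Z W : Type u) [TopologicalSpace Z] [TopologicalSpace W]
      (f : Z → W), Continuous f → Function.Surjective f → P Z → P W)
    (hUnion : ∀ (Z : Type u) [TopologicalSpace Z] (A : ℕ → Set Z),
      (∀ n, P (A n)) → (⋃ n, A n) = Set.univ → P Z)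
    (X Y : Type u) [TopologicalSpace X] [MetricSpace Y]
    (hX : P X)
    (Ψ : X → Y) (Ψn : ℕ → X → Y) (hc : ∀ n, Continuous (Ψn n))
    (ε : ℕ → ℝ) (hεpos : ∀ n, 0 < ε n) (hε0 : Tendsto ε atTop (nhds 0))
    (hqn : ∀ x : X, ∀ᶠ n in atTop, dist (Ψn n x) (Ψ x) < ε n) :
    P (Set.range Ψ) := by
  classical
  -- the closed pieces
  set S : ℕ → Set X := fun m =>
    {x | ∀ n, m ≤ n → ∀ k, m ≤ k → dist (Ψn n x) (Ψn k x) ≤ ε n + ε k} with hS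
  -- pointwise convergence
  have hpt : ∀ x, Tendsto (fun n => Ψn n x) atTop (nhds (Ψ x)) := by
    intro x
    rw [tendsto_iff_dist_tendsto_zero]
    refine squeeze_zero' (Eventually.of_forall fun n => dist_nonneg)
      ((hqn x).mono fun n h => le_of_lt h) hε0
  -- the pieces cover X
  have hcover : ∀ x, ∃ m, x ∈ S m := by
    intro x
    obtain ⟨N, hN⟩ := (eventually_atTop).1 (hqn x)
    refine ⟨N, fun n hn k hk => ?_⟩
    calc dist (Ψn n x) (Ψn k x) ≤ dist (Ψn n x) (Ψ x) + dist (Ψ x) (Ψn k x) :=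
          dist_triangle _ _ _
      _ ≤ ε n + ε k := add_le_add (le_of_lt (hN n hn))
          (by rw [dist_comm]; exact le_of_lt (hN k hk))
  -- each piece is closed
  have hSclosed : ∀ m, IsClosed (S m) := by
    intro m
    have : S m = ⋂ (n : ℕ) (_ : m ≤ n) (k : ℕ) (_ : m ≤ k),
        {x | dist (Ψn n x) (Ψn k x) ≤ ε n + ε k} := by
      ext x; simp [hS]
    rw [this]
    exact isClosed_iInter fun n => isClosed_iInter fun _ =>
      isClosed_iInter fun k => isClosed_iInter fun _ =>
        isClosed_le (Continuous.dist (hc n) (hc k)) continuous_const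
  -- on each piece, dist (Ψn n x) (Ψ x) ≤ ε n for n ≥ m
  have hbd : ∀ m, ∀ x ∈ S m, ∀ n, m ≤ n → dist (Ψn n x) (Ψ x) ≤ ε n := by
    intro m x hx n hn
    have h1 : Tendsto (fun k => dist (Ψn n x) (Ψn k x)) atTop
        (nhds (dist (Ψn n x) (Ψ x))) :=
      (Continuous.tendsto (continuous_const.dist continuous_id) _).comp (hpt x)
    have h2 : Tendsto (fun k => ε n + ε k) atTop (nhds (ε n + 0)) :=
      tendsto_const_nhds.add hε0
    have h3 : dist (Ψn n x) (Ψ x) ≤ ε n + 0 := by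
      refine le_of_tendsto_of_tendsto h1 h2 ?_
      filter_upwards [eventually_ge_atTop m] with k hk
      exact hx n hn k hk
    simpa using h3
  -- Ψ is continuous on each piece (uniform limit)
  have hcont : ∀ m, Continuous (fun x : S m => Ψ (x : X)) := by
    intro m
    have hU : TendstoUniformly (fun n (x : S m) => Ψn n (x : X))
        (fun x : S m => Ψ (x : X)) atTop := by
      rw [Metric.tendstoUniformly_iff]
      intro δ hδ
      have hsmall : ∀ᶠ n in atTop, ε n < δ :=
        (hε0.eventually (gt_mem_nhds hδ))
      filter_upwards [hsmall, eventually_ge_atTop m] with n hn hmn x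
      rw [dist_comm]
      exact lt_of_le_of_lt (hbd m x x.2 n hmn) hn
    exact hU.continuous (Frequently.of_forall fun n =>
      (hc n).comp continuous_subtype_val)
  -- P holds for each piece
  have hPS : ∀ m, P (S m) := fun m => hClosed X (S m) (hSclosed m) hX
  -- P holds for images of the pieces
  have hPim : ∀ m, P (Ψ '' S m) := by
    intro m
    refine hImage (S m) (Ψ '' S m) (fun x => ⟨Ψ x, x, x.2, rfl⟩)
      (Continuous.subtype_mk (hcont m) _) ?_ (hPS m)
    rintro ⟨y, x, hx, rfl⟩
    exact ⟨⟨x, hx⟩, rfl⟩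
  -- assemble via countable union inside range Ψ
  set A : ℕ → Set (Set.range Ψ) := fun m => Subtype.val ⁻¹' (Ψ '' S m) with hA
  refine hUnion (Set.range Ψ) A (fun m => ?_) ?_
  · refine hImage (Ψ '' S m) (A m)
      (fun y => ⟨⟨(y : Y), by obtain ⟨x, hx, hxy⟩ := y.2; exact ⟨x, hxy⟩⟩, y.2⟩)
      ?_ ?_ (hPim m)
    · exact Continuous.subtype_mk (Continuous.subtype_mk continuous_subtype_val _) _
    · rintro ⟨⟨y, hy⟩, hmem⟩
      exact ⟨⟨y, hmem⟩, rfl⟩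
  · ext ⟨y, x, rfl⟩
    simp only [Set.mem_iUnion, Set.mem_univ, iff_true, hA, Set.mem_preimage]
    obtain ⟨m, hm⟩ := hcover x
    exact ⟨m, x, hm, rfl⟩
end

section
/- Let X be a topological space and (U_n) a point-cofinite cover of X by open sets, with each U_n = ⋃_m C^n_m a union of pairwise disjoint clopen sets C^n_m. Define Ψ : X → (ℕ ∪ {∞})^ℕ by Ψ(x)(n) = m if x ∈ C^n_m, and Ψ(x)(n) = ∞ if x ∉ U_n. Then Ψ is continuous, and Ψ(x) is eventually finite for every x ∈ X. -/
open OnePoint Filter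

/-- Given a point-cofinite open cover `(U n)` of `X`, with each
`U n = ⋃ m, C n m` a union of pairwise disjoint clopen sets, the map
`Ψ : X → (ℕ ∪ {∞})^ℕ` with `Ψ x n = m` when `x ∈ C n m` and `Ψ x n = ∞`
when `x ∉ U n` is continuous, and `Ψ x` is eventually finite for each `x`. -/
theorem marczewski_onepoint_map_continuous
    {X : Type*} [TopologicalSpace X]
    (U : ℕ → Set X) (hUopen : ∀ n, IsOpen (U n))
    (hUcof : ∀ x : X, ∀ᶠ n in atTop, x ∈ U n)
    (C : ℕ → ℕ → Set X) (hCclopen : ∀ n m, IsClopen (C n m))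
    (hCdisj : ∀ n, Pairwise (Function.onFun Disjoint (C n)))
    (hCU : ∀ n, U n = ⋃ m, C n m)
    (Ψ : X → ℕ → OnePoint ℕ)
    (hΨfin : ∀ n m (x : X), x ∈ C n m → Ψ x n = (m : OnePoint ℕ))
    (hΨinf : ∀ n (x : X), x ∉ U n → Ψ x n = ∞) :
    Continuous Ψ ∧ ∀ x : X, ∀ᶠ n in atTop, Ψ x n ≠ ∞ := by
  constructor
  · rw [continuous_pi_iff]
    intro n
    rw [continuous_def]
    intro s hs
    by_cases hinf : ∞ ∈ s
    · have h1 := (OnePoint.isOpen_iff_of_mem hinf).mp hs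
      have hfin : {m : ℕ | (m : OnePoint ℕ) ∉ s}.Finite := h1.2.finite DiscreteTopology.isDiscrete
      have hpre : (fun x => Ψ x n) ⁻¹' s = (⋃ m ∈ {m : ℕ | (m : OnePoint ℕ) ∉ s}, C n m)ᶜ := by
        ext x
        simp only [Set.mem_preimage, Set.mem_compl_iff, Set.mem_iUnion, Set.mem_setOf_eq,
          not_exists]
        constructor
        · intro hx m hm hxm
          exact hm (hΨfin n m x hxm ▸ hx)
        · intro hx
          by_cases hxU : x ∈ U n
          · rw [hCU] at hxU
            obtain ⟨m, hm⟩ := Set.mem_iUnion.mp hxU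
            rw [hΨfin n m x hm]
            by_contra h
            exact hx m h hm
          · rw [hΨinf n x hxU]; exact hinf
      rw [hpre]
      exact (hfin.isClosed_biUnion fun m _ => (hCclopen n m).isClosed).isOpen_compl
    · have hpre : (fun x => Ψ x n) ⁻¹' s = ⋃ m ∈ {m : ℕ | (m : OnePoint ℕ) ∈ s}, C n m := by
        ext x
        simp only [Set.mem_preimage, Set.mem_iUnion, Set.mem_setOf_eq]
        constructor
        · intro hx
          by_cases hxU : x ∈ U n
          · rw [hCU] at hxU
            obtain ⟨m, hm⟩ := Set.mem_iUnion.mp hxU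
            exact ⟨m, hΨfin n m x hm ▸ hx, hm⟩
          · exact absurd (hΨinf n x hxU ▸ hx) hinf
        · rintro ⟨m, hms, hm⟩
          rw [hΨfin n m x hm]; exact hms
      rw [hpre]
      exact isOpen_biUnion fun m _ => (hCclopen n m).isOpen
  · intro x
    filter_upwards [hUcof x] with n hn
    rw [hCU] at hn
    obtain ⟨m, hm⟩ := Set.mem_iUnion.mp hn
    rw [hΨfin n m x hm]
    exact OnePoint.coe_ne_infty m
end

section
/- Let X be a topological space such that every continuous image of X in ℕ^ℕ is ≤*-bounded, and suppose every G_δ subset of X (with the subspace topology) also has this property for its continuous images in ℕ^ℕ. If Ψ : X → EF ⊆ (ℕ ∪ {∞})^ℕ is continuous, then Ψ[X] is a bounded subset of EF. -/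
open OnePoint Filter

/-- `f ≤* g` for `f ∈ (ℕ ∪ {∞})^ℕ`, `g ∈ ℕ^ℕ`. -/
def EFLeStar (f : ℕ → OnePoint ℕ) (g : ℕ → ℕ) : Prop :=
  ∀ᶠ n in atTop, ∀ m : ℕ, f n = (m : OnePoint ℕ) → m ≤ g n

/-- If every continuous image of `X` in `ℕ^ℕ` is `≤*`-bounded, and the same
holds for every `G_δ` subspace of `X`, then every continuous image of `X`
in the space `EF` of eventually finite elements of `(ℕ ∪ {∞})^ℕ` is
bounded. -/
theorem continuous_EF_image_bounded
    {X : Type*} [TopologicalSpace X]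
    (hX : ∀ Φ : X → ℕ → ℕ, Continuous Φ →
      ∃ g : ℕ → ℕ, ∀ x : X, ∀ᶠ n in atTop, Φ x n ≤ g n)
    (hGδ : ∀ G : Set X, IsGδ G → ∀ Φ : G → ℕ → ℕ, Continuous Φ →
      ∃ g : ℕ → ℕ, ∀ y : G, ∀ᶠ n in atTop, Φ y n ≤ g n)
    (Ψ : X → ℕ → OnePoint ℕ) (hΨ : Continuous Ψ)
    (hEF : ∀ x : X, ∀ᶠ n in atTop, Ψ x n ≠ ∞) :
    ∃ g : ℕ → ℕ, ∀ x : X, EFLeStar (Ψ x) g := by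
  classical
  -- the Gδ sets
  set G : ℕ → Set X := fun n => {x | ∀ m, n ≤ m → Ψ x m ≠ ∞} with hG
  have hGδn : ∀ n, IsGδ (G n) := by
    intro n
    have : G n = ⋂ m : ℕ, {x | n ≤ m → Ψ x m ≠ ∞} := by
      ext x; simp [hG, Set.mem_iInter]
    rw [this]
    refine IsGδ.iInter_of_isOpen fun m => ?_
    by_cases hm : n ≤ m
    · have : {x : X | n ≤ m → Ψ x m ≠ ∞} = (fun x => Ψ x m) ⁻¹' ({∞}ᶜ) := by
        ext x; simp [hm]
      rw [this]
      exact (isClosed_infty.isOpen_compl).preimage ((continuous_apply m).comp hΨ)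
    · have : {x : X | n ≤ m → Ψ x m ≠ ∞} = Set.univ := by
        ext x; simp [hm]
      rw [this]; exact isOpen_univ
  -- the shifted maps
  have key : ∀ n : ℕ, ∃ gn : ℕ → ℕ, ∀ y : G n, ∀ᶠ m in atTop,
      (Ψ y.1 (m + n)).getD 0 ≤ gn m := by
    intro n
    refine hGδ (G n) (hGδn n) (fun y m => (Ψ y.1 (m + n)).getD 0) ?_
    refine continuous_pi fun m => ?_
    rw [continuous_discrete_rng]
    intro k
    have hopen : IsOpen ({((k : ℕ) : OnePoint ℕ)} : Set (OnePoint ℕ)) := by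
      have := isOpenEmbedding_coe (X := ℕ) |>.isOpenMap {k} (isOpen_discrete _)
      simpa using this
    have : (fun y : G n => (Ψ y.1 (m + n)).getD 0) ⁻¹' {k}
        = (fun y : G n => Ψ y.1 (m + n)) ⁻¹' {((k : ℕ) : OnePoint ℕ)} := by
      ext ⟨x, hx⟩
      have hne : Ψ x (m + n) ≠ ∞ := hx (m + n) (Nat.le_add_left n m)
      simp only [Set.mem_preimage, Set.mem_singleton_iff]
      cases hΨ' : Ψ x (m + n) with
      | infty => exact absurd hΨ' hne
      | coe v => exact OnePoint.coe_eq_coe.symm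
    rw [this]
    exact hopen.preimage (((continuous_apply (m + n)).comp hΨ).comp continuous_subtype_val)
  choose gs hgs using key
  refine ⟨fun k => (Finset.range (k + 1)).sup (fun n => gs n (k - n)), fun x => ?_⟩
  obtain ⟨n, hn⟩ := (eventually_atTop).1 (hEF x)
  have hx : x ∈ G n := fun m hm => hn m hm
  obtain ⟨M, hM⟩ := (eventually_atTop).1 (hgs n ⟨x, hx⟩)
  rw [EFLeStar, eventually_atTop]
  refine ⟨M + n, fun k hk m hΨk => ?_⟩
  have hnk : n ≤ k := le_trans (Nat.le_add_left n M) hk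
  have hMk : M ≤ k - n := by omega
  have := hM (k - n) hMk
  have hkn : k - n + n = k := Nat.sub_add_cancel hnk
  rw [hkn] at this
  have hm : (Ψ x k).getD 0 = m := by rw [hΨk]; rfl
  rw [hm] at this
  exact le_trans this
    (Finset.le_sup (f := fun n => gs n (k - n)) (Finset.mem_range.2 (by omega)))
end

section
/- Let X be a topological space and suppose that every Borel image of X in ℕ^ℕ is ≤*-bounded. Then X is a QN space: whenever continuous functions f_n : X → ℝ converge pointwise to 0, there exist positive reals ε_n → 0 such that for each x ∈ X, |f_n(x)| < ε_n for all but finitely many n. -/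
open Filter

/-- If every Borel image of `X` in `ℕ^ℕ` is `≤*`-bounded, then `X` is a QN
space: every sequence of continuous real-valued functions on `X` converging
pointwise to `0` converges quasi-normally to `0`. -/
theorem QN_of_bounded_Borel_images
    {X : Type*} [TopologicalSpace X] [MeasurableSpace X] [BorelSpace X]
    (hX : ∀ Ψ : X → ℕ → ℕ, Measurable Ψ →
      ∃ g : ℕ → ℕ, ∀ x : X, ∀ᶠ n in atTop, Ψ x n ≤ g n)
    (f : ℕ → X → ℝ) (hf : ∀ n, Continuous (f n))
    (hlim : ∀ x : X, Tendsto (fun n => f n x) atTop (nhds 0)) :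
    ∃ ε : ℕ → ℝ, (∀ n, 0 < ε n) ∧ Tendsto ε atTop (nhds 0) ∧
      ∀ x : X, ∀ᶠ n in atTop, |f n x| < ε n := by
  classical
  -- the predicate: from stage k on, |f m x| < 1/(n+1)
  set p : X → ℕ → ℕ → Prop := fun x n k => ∀ m ≥ k, |f m x| < 1 / (n + 1) with hp
  have hex : ∀ x n, ∃ k, p x n k := by
    intro x n
    have : ∀ᶠ m in atTop, |f m x| < 1 / (n + 1 : ℝ) := by
      have := (hlim x).eventually (eventually_abs_sub_lt 0 (by positivity : (0:ℝ) < 1 / (n+1)))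
      simpa using this
    rcases this.exists_forall_of_atTop with ⟨k, hk⟩
    exact ⟨k, hk⟩
  set Ψ : X → ℕ → ℕ := fun x n => Nat.find (hex x n) with hΨ
  have hmeas : Measurable Ψ := by
    apply measurable_pi_lambda
    intro n
    apply measurable_find
    intro k
    have : {x | p x n k} = ⋂ m ∈ Set.Ici k, {x | |f m x| < 1 / (n + 1)} := by
      ext x; simp [p]
    rw [this]
    refine MeasurableSet.biInter (Set.to_countable _) fun m _ => ?_
    exact (isOpen_lt (by continuity) continuous_const).measurableSet
  obtain ⟨g, hg⟩ := hX Ψ hmeas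
  -- a strictly increasing dominating function
  set G : ℕ → ℕ := fun n => (Finset.range (n + 1)).sum (fun k => g k + 1) with hG
  have hGmono : StrictMono G := by
    apply strictMono_nat_of_lt_succ
    intro n
    simp [hG, Finset.sum_range_succ]
  have hGg : ∀ n, g n < G n := by
    intro n
    have : g n + 1 ≤ G n :=
      Finset.single_le_sum (f := fun k => g k + 1) (fun i _ => Nat.zero_le _)
        (Finset.self_mem_range_succ n)
    omega
  have hGn : ∀ n, n < G n := by
    intro n
    induction n with
    | zero => have := hGg 0; omega
    | succ k ih => have h2 : G k < G (k + 1) := hGmono (by omega); omega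
  -- index function
  set idx : ℕ → ℕ := fun m => Nat.findGreatest (fun n => G n ≤ m) m with hidx
  refine ⟨fun m => 1 / (idx m + 1), fun m => by positivity, ?_, ?_⟩
  · -- tendsto 0
    have hidxTop : Tendsto idx atTop atTop := by
      refine tendsto_atTop.2 fun n => eventually_atTop.2 ⟨G n, fun m hm => ?_⟩
      exact Nat.le_findGreatest ((hGn n).le.trans hm) hm
    have : Tendsto (fun m => 1 / ((idx m : ℝ) + 1)) atTop (nhds 0) :=
      tendsto_one_div_add_atTop_nhds_zero_nat.comp hidxTop
    simpa using this
  · intro x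
    obtain ⟨N, hN⟩ := (hg x).exists_forall_of_atTop
    refine eventually_atTop.2 ⟨G N, fun m hm => ?_⟩
    have hNle : N ≤ idx m := Nat.le_findGreatest ((hGn N).le.trans hm) hm
    have hGidx : G (idx m) ≤ m := by
      have := Nat.findGreatest_spec (P := fun n => G n ≤ m) ((hGn N).le.trans hm) hm
      exact this
    have hΨle : Ψ x (idx m) ≤ m :=
      (hN _ hNle).trans ((hGg _).le.trans hGidx)
    have := Nat.find_spec (hex x (idx m)) m hΨle
    simpa using this
end

section
/- Let X be a QN space (every sequence of continuous real-valued functions on X converging pointwise to 0 converges quasi-normally to 0). Then every continuous image Y of X in the space EF of eventually finite elements of (ℕ ∪ {∞})^ℕ is bounded. (Proof via: for y ∈ Y define f_n(y) = 1/min(y⁻¹(n)) with conventions min ∅ = ∞, 1/∞ = 0; then f_n → 0 pointwise on Y.) -/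
open OnePoint Filter

lemma isOpen_single (m : ℕ) : IsOpen ({(m : OnePoint ℕ)} : Set (OnePoint ℕ)) := by
  have h : ({(m : OnePoint ℕ)} : Set (OnePoint ℕ)) = (↑) '' ({m} : Set ℕ) := by simp
  rw [h]
  exact OnePoint.isOpen_image_coe.2 (isOpen_discrete _)

lemma isOpen_single_compl (m : ℕ) : IsOpen ({(m : OnePoint ℕ)}ᶜ : Set (OnePoint ℕ)) := by
  have h : ({(m : OnePoint ℕ)} : Set (OnePoint ℕ)) = (↑) '' ({m} : Set ℕ) := by simp
  rw [h]
  exact OnePoint.isOpen_compl_image_coe.2 ⟨isClosed_singleton, isCompact_singleton⟩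

/-- If `X` is a QN space (every pointwise convergent-to-`0` sequence of
continuous real-valued functions on `X` converges quasi-normally to `0`),
then every continuous image of `X` in the space `EF` of eventually finite
elements of `(ℕ ∪ {∞})^ℕ` is bounded. -/
theorem QN_implies_bounded_EF_images
    {X : Type*} [TopologicalSpace X]
    (hQN : ∀ f : ℕ → X → ℝ, (∀ n, Continuous (f n)) →
      (∀ x : X, Tendsto (fun n => f n x) atTop (nhds 0)) →
      ∃ ε : ℕ → ℝ, (∀ n, 0 < ε n) ∧ Tendsto ε atTop (nhds 0) ∧
        ∀ x : X, ∀ᶠ n in atTop, |f n x| < ε n)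
    (Ψ : X → ℕ → OnePoint ℕ) (hΨ : Continuous Ψ)
    (hEF : ∀ x : X, ∀ᶠ n in atTop, Ψ x n ≠ ∞) :
    ∃ g : ℕ → ℕ, ∀ x : X, EFLeStar (Ψ x) g := by
  classical
  -- the coordinate maps are continuous
  have hcoord : ∀ k : ℕ, Continuous (fun x => Ψ x k) :=
    fun k => (continuous_apply k).comp hΨ
  -- the sequence of functions
  set f : ℕ → X → ℝ := fun m x =>
    if h : ∃ k, Ψ x k = (m : OnePoint ℕ) then ((Nat.find h : ℝ) + 1)⁻¹ else 0 with hf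
  have hfval : ∀ (m : ℕ) (x : X) (h : ∃ k, Ψ x k = (m : OnePoint ℕ)),
      f m x = ((Nat.find h : ℝ) + 1)⁻¹ := by
    intro m x h; simp [hf, h]
  have hf0 : ∀ (m : ℕ) (x : X), ¬(∃ k, Ψ x k = (m : OnePoint ℕ)) → f m x = 0 := by
    intro m x h; simp [hf, h]
  have hfnonneg : ∀ m x, 0 ≤ f m x := by
    intro m x
    by_cases h : ∃ k, Ψ x k = (m : OnePoint ℕ)
    · rw [hfval m x h]; positivity
    · rw [hf0 m x h]
  -- a bound when no small index hits m
  have hfsmall : ∀ (K m : ℕ) (x : X), (∀ j ≤ K, Ψ x j ≠ (m : OnePoint ℕ)) →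
      f m x < ((K : ℝ) + 1)⁻¹ := by
    intro K m x hx
    by_cases h : ∃ k, Ψ x k = (m : OnePoint ℕ)
    · rw [hfval m x h]
      have hk : K < Nat.find h := by
        by_contra hc
        push_neg at hc
        exact hx _ hc (Nat.find_spec h)
      have : (K : ℝ) + 1 < (Nat.find h : ℝ) + 1 := by
        have := (Nat.cast_lt (α := ℝ)).2 hk
        linarith
      exact inv_strictAnti₀ (by positivity) this
    · rw [hf0 m x h]; positivity
  -- continuity
  have hcont : ∀ m, Continuous (f m) := by
    intro m
    rw [continuous_iff_continuousAt]
    intro x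
    by_cases h : ∃ k, Ψ x k = (m : OnePoint ℕ)
    · -- locally constant near x
      set k₀ := Nat.find h with hk₀
      have hU : IsOpen {y : X | Ψ y k₀ = (m : OnePoint ℕ) ∧
          ∀ j < k₀, Ψ y j ≠ (m : OnePoint ℕ)} := by
        have h1 : IsOpen {y : X | Ψ y k₀ = (m : OnePoint ℕ)} :=
          (isOpen_single m).preimage (hcoord k₀)
        have h2 : IsOpen {y : X | ∀ j < k₀, Ψ y j ≠ (m : OnePoint ℕ)} := by
          have : {y : X | ∀ j < k₀, Ψ y j ≠ (m : OnePoint ℕ)} =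
              ⋂ j ∈ Finset.range k₀, {y : X | Ψ y j ≠ (m : OnePoint ℕ)} := by
            ext y; simp
          rw [this]
          exact isOpen_biInter_finset fun j _ =>
            (isOpen_single_compl m).preimage (hcoord j)
        exact h1.inter h2
      have hx : x ∈ {y : X | Ψ y k₀ = (m : OnePoint ℕ) ∧
          ∀ j < k₀, Ψ y j ≠ (m : OnePoint ℕ)} :=
        ⟨Nat.find_spec h, fun j hj => Nat.find_min h hj⟩
      have heq : f m =ᶠ[nhds x] fun _ => ((k₀ : ℝ) + 1)⁻¹ := by
        filter_upwards [hU.mem_nhds hx] with y hy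
        have hy' : ∃ k, Ψ y k = (m : OnePoint ℕ) := ⟨k₀, hy.1⟩
        rw [hfval m y hy']
        have h1 : Nat.find hy' ≤ k₀ := Nat.find_le hy.1
        have h2 : ¬ Nat.find hy' < k₀ := fun hc => hy.2 _ hc (Nat.find_spec hy')
        have h3 : Nat.find hy' = k₀ := by omega
        rw [h3]
      exact ContinuousAt.congr continuousAt_const heq.symm
    · -- f m x = 0, epsilon argument
      have hx0 : f m x = 0 := hf0 m x h
      rw [ContinuousAt, hx0]
      rw [Metric.tendsto_nhds]
      intro ε hε
      obtain ⟨K, hK⟩ := exists_nat_gt ε⁻¹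
      have hKε : ((K : ℝ) + 1)⁻¹ < ε := by
        rw [inv_lt_comm₀ (by positivity) hε]
        linarith
      have hV : IsOpen {y : X | ∀ j ≤ K, Ψ y j ≠ (m : OnePoint ℕ)} := by
        have : {y : X | ∀ j ≤ K, Ψ y j ≠ (m : OnePoint ℕ)} =
            ⋂ j ∈ Finset.range (K + 1), {y : X | Ψ y j ≠ (m : OnePoint ℕ)} := by
          ext y; simp [Nat.lt_succ_iff]
        rw [this]
        exact isOpen_biInter_finset fun j _ =>
          (isOpen_single_compl m).preimage (hcoord j)
      have hxV : x ∈ {y : X | ∀ j ≤ K, Ψ y j ≠ (m : OnePoint ℕ)} :=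
        fun j _ hj => h ⟨j, hj⟩
      filter_upwards [hV.mem_nhds hxV] with y hy
      rw [Real.dist_eq, sub_zero, abs_of_nonneg (hfnonneg m y)]
      exact lt_trans (hfsmall K m y hy) hKε
  -- pointwise convergence to 0
  have hptw : ∀ x : X, Tendsto (fun m => f m x) atTop (nhds 0) := by
    intro x
    rw [Metric.tendsto_nhds]
    intro ε hε
    obtain ⟨K, hK⟩ := exists_nat_gt ε⁻¹
    have hKε : ((K : ℝ) + 1)⁻¹ < ε := by
      rw [inv_lt_comm₀ (by positivity) hε]
      linarith
    have hev : ∀ j, ∀ᶠ m : ℕ in atTop, Ψ x j ≠ (m : OnePoint ℕ) := by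
      intro j
      rcases h' : Ψ x j with _ | m₀
      · exact Eventually.of_forall fun m hc => OnePoint.coe_ne_infty m hc.symm
      · filter_upwards [eventually_gt_atTop m₀] with m hm hc
        have : m₀ = m := Option.some_injective _ hc
        omega
    have hall : ∀ᶠ m : ℕ in atTop, ∀ j ∈ Finset.range (K + 1),
        Ψ x j ≠ (m : OnePoint ℕ) :=
      (Finset.range (K + 1)).eventually_all.2 fun j _ => hev j
    filter_upwards [hall] with m hm
    rw [Real.dist_eq, sub_zero, abs_of_nonneg (hfnonneg m x)]
    exact lt_trans (hfsmall K m x fun j hj => hm j (Finset.mem_range.2 (Nat.lt_succ_of_le hj))) hKε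
  -- apply QN
  obtain ⟨ε, hεpos, hε0, hεx⟩ := hQN f hcont hptw
  -- B m = least j with (j+1)⁻¹ < ε m
  have hBex : ∀ m : ℕ, ∃ j : ℕ, ((j : ℝ) + 1)⁻¹ < ε m := by
    intro m
    obtain ⟨j, hj⟩ := exists_nat_gt (ε m)⁻¹
    refine ⟨j, ?_⟩
    rw [inv_lt_comm₀ (by positivity) (hεpos m)]
    linarith
  set B : ℕ → ℕ := fun m => Nat.find (hBex m) with hB
  have hBtop : Tendsto B atTop atTop := by
    rw [tendsto_atTop]
    intro N
    have : ∀ᶠ m in atTop, ε m < ((N : ℝ) + 1)⁻¹ := by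
      have := Metric.tendsto_nhds.1 hε0 (((N : ℝ) + 1)⁻¹) (by positivity)
      filter_upwards [this] with m hm
      rw [Real.dist_eq, sub_zero, abs_of_nonneg (hεpos m).le] at hm
      exact hm
    filter_upwards [this] with m hm
    have hspec := Nat.find_spec (hBex m)
    by_contra hc
    push_neg at hc
    have hBN : (B m : ℝ) + 1 ≤ (N : ℝ) + 1 := by
      have := (Nat.cast_le (α := ℝ)).2 hc.le
      linarith
    have : ((N : ℝ) + 1)⁻¹ ≤ ((B m : ℝ) + 1)⁻¹ :=
      inv_anti₀ (by positivity) hBN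
    have := hspec.trans hm
    linarith
  -- choose M n such that m ≥ M n → B m > n
  have hM : ∀ n : ℕ, ∃ M : ℕ, ∀ m ≥ M, n < B m := by
    intro n
    exact eventually_atTop.1 (hBtop.eventually (eventually_gt_atTop n))
  choose M hMspec using hM
  refine ⟨fun n => n + M n, fun x => ?_⟩
  obtain ⟨N, hN⟩ := eventually_atTop.1 (hεx x)
  unfold EFLeStar
  filter_upwards [eventually_ge_atTop N] with n hn
  intro m hm
  by_cases hmn : m ≤ n
  · omega
  · push_neg at hmn
    have hmN : N ≤ m := le_trans hn hmn.le
    have hfm := hN m hmN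
    have hex : ∃ k, Ψ x k = (m : OnePoint ℕ) := ⟨n, hm⟩
    rw [hfval m x hex, abs_of_nonneg (by positivity)] at hfm
    have hBle : B m ≤ Nat.find hex := Nat.find_le hfm
    have hkn : Nat.find hex ≤ n := Nat.find_le hm
    by_contra hc
    push_neg at hc
    have : M n ≤ m := by omega
    have := hMspec n m this
    omega
end

section
/- For Y ⊆ EF and g ∈ ℕ^ℕ increasing, suppose: g(1) = k, and for each n, whenever m ≥ g(n) we have ε_m < 1/n, where (ε_m) are positive reals, and every y ∈ Y satisfies: for all n ≥ k with y(n) < ∞, 1/min(y⁻¹(y(n))) < ε_{y(n)} whenever y(n) > k. Then every y ∈ Y is bounded by g, i.e., for all n with y(n) < ∞, y(n) ≤ g(n). -/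
open OnePoint Filter

/-- A combinatorial boundedness lemma in `EF` (indices run over `n ≥ 1`, as in
the classical setting). Suppose `g` is increasing with `g 1 = k`, the
positive reals `ε m` satisfy `ε m < 1/n` whenever `m ≥ g n` (`n ≥ 1`), and
every `y ∈ Y ⊆ EF` satisfies: whenever `y n` takes a finite value `j > k`,
`1 / min y⁻¹(j) < ε j`. Then every `y ∈ Y` is bounded by `g`: for all
`n ≥ 1` with `y n` finite, `y n ≤ g n`. -/
theorem EF_bounded_by_g
    (Y : Set (ℕ → OnePoint ℕ))
    (hEF : ∀ y ∈ Y, ∀ᶠ n in atTop, y n ≠ ∞)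
    (g : ℕ → ℕ) (hg : Monotone g) (k : ℕ) (hgk : g 1 = k)
    (ε : ℕ → ℝ) (hεpos : ∀ m, 0 < ε m)
    (hε : ∀ n : ℕ, 1 ≤ n → ∀ m : ℕ, g n ≤ m → ε m < 1 / (n : ℝ))
    (hY : ∀ y ∈ Y, ∀ n : ℕ, 1 ≤ n → ∀ j : ℕ, y n = (j : OnePoint ℕ) →
      k < j → (1 : ℝ) / ((sInf {m : ℕ | 1 ≤ m ∧ y m = y n} : ℕ) : ℝ) < ε j) :
    ∀ y ∈ Y, ∀ n : ℕ, 1 ≤ n → ∀ j : ℕ, y n = (j : OnePoint ℕ) → j ≤ g n := by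
  intro y hy n hn j hj
  by_contra h
  push_neg at h
  have hkn : k ≤ g n := hgk ▸ hg hn
  have hkj : k < j := lt_of_le_of_lt hkn h
  set m₀ := sInf {m : ℕ | 1 ≤ m ∧ y m = y n} with hm₀
  have hmem : n ∈ {m : ℕ | 1 ≤ m ∧ y m = y n} := ⟨hn, rfl⟩
  have hm₀le : m₀ ≤ n := Nat.sInf_le hmem
  have hm₀1 : 1 ≤ m₀ := (Nat.sInf_mem ⟨n, hmem⟩).1
  have h1 := hY y hy n hn j hj hkj
  have h2 : g m₀ ≤ j := le_trans (hg hm₀le) h.le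
  have h3 := hε m₀ hm₀1 j h2
  have h4 : (1 : ℝ) / (n : ℝ) ≤ 1 / (m₀ : ℝ) := by
    apply one_div_le_one_div_of_le
    · exact_mod_cast hm₀1
    · exact_mod_cast hm₀le
  have h5 : (0 : ℝ) < 1 / (m₀ : ℝ) := by positivity
  linarith
end

section
/- Suppose X is a topological space such that for every sequence of countable Borel covers (𝒰_n) of X, one can select elements U_n ∈ 𝒰_n forming a point-cofinite cover whenever each 𝒰_n is a Borel point-cofinite cover (i.e., X satisfies S₁(Borel-Γ, Borel-Γ)). Then every Borel image of X in ℕ^ℕ is ≤*-bounded. -/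
open Filter

/-- If `X` satisfies `S₁(Borel-Γ, Borel-Γ)` — from every sequence of Borel
point-cofinite covers of `X` one can select single elements forming a
point-cofinite cover — then every Borel image of `X` in `ℕ^ℕ` is
`≤*`-bounded. -/
theorem bounded_Borel_images_of_S1BorelGamma
    {X : Type*} [TopologicalSpace X] [MeasurableSpace X] [BorelSpace X]
    (hS1 : ∀ 𝒰 : ℕ → ℕ → Set X,
      (∀ n m, MeasurableSet (𝒰 n m)) →
      (∀ n, ∀ x : X, ∀ᶠ m in atTop, x ∈ 𝒰 n m) →
      ∃ sel : ℕ → ℕ, ∀ x : X, ∀ᶠ n in atTop, x ∈ 𝒰 n (sel n))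
    (Ψ : X → ℕ → ℕ) (hΨ : Measurable Ψ) :
    ∃ g : ℕ → ℕ, ∀ x : X, ∀ᶠ n in atTop, Ψ x n ≤ g n := by
  obtain ⟨sel, hsel⟩ := hS1 (fun n m => {x | Ψ x n ≤ m})
    (fun n m => measurableSet_le ((measurable_pi_apply n).comp hΨ) measurable_const)
    (fun n x => eventually_atTop.2 ⟨Ψ x n, fun m hm => hm⟩)
  exact ⟨sel, hsel⟩
end

section
/- Let X be a topological space with the property that every G_δ subset of X has the Hurewicz property U_fin(O, Γ). Then X has the Hurewicz property hereditarily: every subspace Y ⊆ X has U_fin(O, Γ). -/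
open Filter

/-- The Hurewicz property `U_fin(O, Γ)`: for every sequence of countable open
covers, none containing a finite subcover, there are finite subfamilies whose
unions form a point-cofinite cover. -/
def Hurewicz (Z : Type*) [TopologicalSpace Z] : Prop :=
  ∀ 𝒰 : ℕ → ℕ → Set Z,
    (∀ n m, IsOpen (𝒰 n m)) →
    (∀ n, (⋃ m, 𝒰 n m) = Set.univ) →
    (∀ n, ¬ ∃ F : Finset ℕ, (⋃ m ∈ F, 𝒰 n m) = Set.univ) →
    ∃ F : ℕ → Finset ℕ, ∀ z : Z, ∀ᶠ n in atTop, z ∈ ⋃ m ∈ F n, 𝒰 n m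

/-- If every `G_δ` subspace of `X` has the Hurewicz property `U_fin(O, Γ)`,
then every subspace of `X` has it, i.e. `X` is hereditarily Hurewicz. -/
theorem hereditarily_Hurewicz_of_Gdelta_Hurewicz
    {X : Type*} [TopologicalSpace X]
    (hGδ : ∀ G : Set X, IsGδ G → Hurewicz G) :
    ∀ Y : Set X, Hurewicz Y := by
  intro Y 𝒰 hopen hcov hnofin
  -- extract open sets in X
  have hV : ∀ n m, ∃ V : Set X, IsOpen V ∧ Subtype.val ⁻¹' V = 𝒰 n m := by
    intro n m
    exact isOpen_induced_iff.mp (hopen n m)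
  choose V hVopen hVeq using hV
  set G : Set X := ⋂ n, ⋃ m, V n m with hG
  have hYG : Y ⊆ G := by
    intro y hy
    refine Set.mem_iInter.mpr fun n => ?_
    have : (⟨y, hy⟩ : Y) ∈ ⋃ m, 𝒰 n m := (hcov n) ▸ Set.mem_univ _
    obtain ⟨m, hm⟩ := Set.mem_iUnion.mp this
    exact Set.mem_iUnion.mpr ⟨m, by rw [← hVeq n m] at hm; exact hm⟩
  have hGδ' : IsGδ G := .iInter_of_isOpen fun n => isOpen_iUnion fun m => hVopen n m
  -- covers of G
  set W : ℕ → ℕ → Set G := fun n m => (Subtype.val : G → X) ⁻¹' (V n m) with hW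
  have hWopen : ∀ n m, IsOpen (W n m) := fun n m => (hVopen n m).preimage continuous_subtype_val
  have hWcov : ∀ n, (⋃ m, W n m) = Set.univ := by
    intro n
    ext ⟨g, hg⟩
    simp only [Set.mem_univ, iff_true, Set.mem_iUnion]
    have := Set.mem_iInter.mp hg n
    obtain ⟨m, hm⟩ := Set.mem_iUnion.mp this
    exact ⟨m, hm⟩
  have hWnofin : ∀ n, ¬ ∃ F : Finset ℕ, (⋃ m ∈ F, W n m) = Set.univ := by
    intro n ⟨F, hF⟩
    refine hnofin n ⟨F, ?_⟩
    ext ⟨y, hy⟩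
    simp only [Set.mem_univ, iff_true, Set.mem_iUnion]
    have : (⟨y, hYG hy⟩ : G) ∈ ⋃ m ∈ F, W n m := hF ▸ Set.mem_univ _
    obtain ⟨m, hmF, hm⟩ := Set.mem_iUnion₂.mp this
    exact ⟨m, hmF, by rw [← hVeq n m]; exact hm⟩
  obtain ⟨F, hFcov⟩ := hGδ G hGδ' W hWopen hWcov hWnofin
  refine ⟨F, fun z => ?_⟩
  filter_upwards [hFcov ⟨z.1, hYG z.2⟩] with n hn
  obtain ⟨m, hmF, hm⟩ := Set.mem_iUnion₂.mp hn
  exact Set.mem_iUnion₂.mpr ⟨m, hmF, by rw [← hVeq n m]; exact hm⟩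
end

section
/- Let X ⊆ ℝ. Then X is a σ' space (for each F_σ set E ⊆ ℝ there is an F_σ set F ⊆ ℝ with E ∩ F = ∅ and X ⊆ E ∪ F) if and only if: X satisfies the property that for each G_δ set G ⊆ ℝ containing any subspace Y ⊆ X, there is an F_σ set F with Y ⊆ F ⊆ G. (Equivalently, given the Hurewicz characterization, X is σ' iff X is hereditarily Hurewicz.) -/
/-- `F` is an `F_σ` subset of `ℝ`: a countable union of closed sets. -/
def IsFSigma (F : Set ℝ) : Prop :=
  ∃ C : ℕ → Set ℝ, (∀ n, IsClosed (C n)) ∧ F = ⋃ n, C n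

lemma isGδ_compl_of_isFSigma {E : Set ℝ} (hE : IsFSigma E) : IsGδ Eᶜ := by
  obtain ⟨C, hC, rfl⟩ := hE
  rw [Set.compl_iUnion]
  exact .iInter fun n => (hC n).isOpen_compl.isGδ

lemma isFSigma_compl_of_isGδ {G : Set ℝ} (hG : IsGδ G) : IsFSigma Gᶜ := by
  obtain ⟨T, hT, hTc, rfl⟩ := hG
  rcases T.eq_empty_or_nonempty with rfl | hne
  · refine ⟨fun _ => ∅, fun _ => isClosed_empty, ?_⟩
    simp
  · obtain ⟨f, hf⟩ := hTc.exists_surjective hne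
    refine ⟨fun n => (f n : Set ℝ)ᶜ, fun n => (hT _ (f n).2).isClosed_compl, ?_⟩
    ext x
    simp only [Set.mem_compl_iff, Set.mem_sInter, Set.mem_iUnion, not_forall]
    constructor
    · rintro ⟨t, ht, hx⟩
      obtain ⟨n, hn⟩ := hf ⟨t, ht⟩
      exact ⟨n, by rw [hn]; exact hx⟩
    · rintro ⟨n, hx⟩
      exact ⟨f n, (f n).2, hx⟩

/-- `X ⊆ ℝ` is a `σ'` space (for each `F_σ` set `E` there is an `F_σ` set `F`
disjoint from `E` with `X ⊆ E ∪ F`) if and only if every subspace `Y ⊆ X`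
has the interpolation property: for every `G_δ` set `G ⊇ Y` there is an
`F_σ` set `F` with `Y ⊆ F ⊆ G`. -/
theorem sigma'_iff_hereditary_interpolation (X : Set ℝ) :
    (∀ E : Set ℝ, IsFSigma E →
      ∃ F : Set ℝ, IsFSigma F ∧ E ∩ F = ∅ ∧ X ⊆ E ∪ F)
    ↔
    (∀ Y : Set ℝ, Y ⊆ X → ∀ G : Set ℝ, IsGδ G → Y ⊆ G →
      ∃ F : Set ℝ, IsFSigma F ∧ Y ⊆ F ∧ F ⊆ G) := by
  constructor
  · intro h Y hYX G hG hYG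
    obtain ⟨F, hF, hdisj, hcov⟩ := h Gᶜ (isFSigma_compl_of_isGδ hG)
    refine ⟨F, hF, ?_, ?_⟩
    · intro y hy
      rcases hcov (hYX hy) with hc | hc
      · exact absurd (hYG hy) hc
      · exact hc
    · intro x hx
      by_contra hxG
      exact Set.eq_empty_iff_forall_notMem.1 hdisj x ⟨hxG, hx⟩
  · intro h E hE
    obtain ⟨F, hF, hYF, hFG⟩ := h (X \ E) Set.diff_subset Eᶜ
      (isGδ_compl_of_isFSigma hE) (fun x hx => hx.2)
    refine ⟨F, hF, ?_, ?_⟩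
    · ext x
      simp only [Set.mem_inter_iff, Set.mem_empty_iff_false, iff_false, not_and]
      exact fun hxE hxF => hFG hxF hxE
    · intro x hx
      by_cases hxE : x ∈ E
      · exact Or.inl hxE
      · exact Or.inr (hYF ⟨hx, hxE⟩)
end
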